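/- For every Q > 0 there exists ε_0 > 0 such that for all 0 < ε < ε_0 the function F_ε(A) = S_1(A^{−1}) − ε S_n(A^{−1}) satisfies, for every positive definite Hermitian n×n matrix A with S_1(A^{−1}) < Q: F_ε(A) > 0, and at diagonal such A, ∂_{ii}F_ε(A) < 0 for all i, Σ_{k=1}^n (−λ_k ∂_{kk}F_ε(A)) = S_1(A^{−1}) − nε S_n(A^{−1}), and (1/2) F_ε(A) < Σ_{k=1}^n (−λ_k ∂_{kk}F_ε(A)) ≤ S_1(A^{−1}), where λ_1,…,λ_n are the eigenvalues of A. -/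

import Mathlib

/-- `S_k(A)` for an `n × n` matrix `A`: the `k`-th elementary symmetric function of the
eigenvalues of `A`, i.e. the coefficient of `(-x)^(n-k)` in `det (A - x I)`. -/
noncomputable def SmatR (n : ℕ) (k : ℤ) (A : Matrix (Fin n) (Fin n) ℝ) : ℝ :=
  if 0 ≤ k ∧ k ≤ (n : ℤ) then (-1 : ℝ) ^ k.toNat * (Matrix.charpoly A).coeff (n - k.toNat)
  else 0

/-- `∂_{ij} G (A)`: the partial derivative of a function `G` of a matrix with respect to the
`(i,j)` entry, at the matrix `A`. -/
noncomputable def pd (n : ℕ) (G : Matrix (Fin n) (Fin n) ℝ → ℝ) (i j : Fin n)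
    (A : Matrix (Fin n) (Fin n) ℝ) : ℝ :=
  deriv (fun t : ℝ => G (A + t • Matrix.single i j 1)) 0

/-- `S_1(A⁻¹) = S_{n-1}(A)/S_n(A)`, the sum of the reciprocals of the eigenvalues of `A`. -/
noncomputable def S1inv (n : ℕ) (A : Matrix (Fin n) (Fin n) ℝ) : ℝ :=
  SmatR n ((n : ℤ) - 1) A / SmatR n (n : ℤ) A

/-- `S_n(A⁻¹) = S_0(A)/S_n(A) = 1/det A`. -/
noncomputable def Sninv (n : ℕ) (A : Matrix (Fin n) (Fin n) ℝ) : ℝ :=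
  SmatR n 0 A / SmatR n (n : ℤ) A

/-- The operator `F_ε(A) = S_1(A⁻¹) - ε S_n(A⁻¹)`. -/
noncomputable def Fe (n : ℕ) (ε : ℝ) (A : Matrix (Fin n) (Fin n) ℝ) : ℝ :=
  S1inv n A - ε * Sninv n A

open Polynomial Matrix Finset

-- coeff 0 of product
lemma coeff0_prod {ι : Type*} (s : Finset ι) (μ : ι → ℝ) :
    (∏ i ∈ s, (X - C (μ i))).coeff 0 = ∏ i ∈ s, (-μ i) := by
  rw [coeff_zero_eq_eval_zero, eval_prod]
  simp

lemma coeff1_prod {ι : Type*} [DecidableEq ι] (s : Finset ι) (μ : ι → ℝ) :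
    (∏ i ∈ s, (X - C (μ i))).coeff 1 = ∑ i ∈ s, ∏ j ∈ s.erase i, (-μ j) := by
  classical
  induction s using Finset.induction_on with
  | empty => simp [Polynomial.coeff_one]
  | insert a s ha ih =>
    rw [Finset.prod_insert ha, Finset.sum_insert ha]
    have hmul : ((X - C (μ a)) * ∏ i ∈ s, (X - C (μ i))).coeff 1 =
        (X - C (μ a)).coeff 0 * (∏ i ∈ s, (X - C (μ i))).coeff 1 +
        (X - C (μ a)).coeff 1 * (∏ i ∈ s, (X - C (μ i))).coeff 0 := by
      rw [coeff_mul]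
      rw [Finset.Nat.antidiagonal_succ]
      norm_num [Prod.map, coeff_one, coeff_C]
    rw [hmul, ih, coeff0_prod]
    have h1 : (X - C (μ a)).coeff 0 = -μ a := by simp
    have h2 : (X - C (μ a)).coeff 1 = 1 := by simp
    rw [h1, h2, Finset.erase_insert ha, Finset.mul_sum]
    rw [one_mul, add_comm]
    congr 1
    apply Finset.sum_congr rfl
    intro i hi
    rw [Finset.erase_insert_of_ne (by rintro rfl; exact ha hi)]
    rw [Finset.prod_insert (fun h => ha (Finset.erase_subset _ _ h))]

lemma charpoly_diag (n : ℕ) (μ : Fin n → ℝ) :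
    (Matrix.diagonal μ).charpoly = ∏ i, (X - C (μ i)) := by
  rw [Matrix.charpoly]
  have h : charmatrix (diagonal μ) = diagonal (fun i => X - C (μ i)) := by
    ext i j
    by_cases hij : i = j
    · subst hij; simp
    · simp [charmatrix_apply_ne _ _ _ hij, diagonal_apply_ne _ hij]
  rw [h, det_diagonal]

lemma charpoly_conj (n : ℕ) (U : Matrix.unitaryGroup (Fin n) ℝ) (D : Matrix (Fin n) (Fin n) ℝ) :
    ((U : Matrix (Fin n) (Fin n) ℝ) * D * star (U : Matrix (Fin n) (Fin n) ℝ)).charpoly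
      = D.charpoly := by
  have hUV : (U : Matrix (Fin n) (Fin n) ℝ) * star (U : Matrix (Fin n) (Fin n) ℝ) = 1 := by
    simpa using (Matrix.mem_unitaryGroup_iff.mp U.2)
  have hVU : star (U : Matrix (Fin n) (Fin n) ℝ) * (U : Matrix (Fin n) (Fin n) ℝ) = 1 := by
    simpa using (Matrix.mem_unitaryGroup_iff'.mp U.2)
  set C' : ℝ →+* Polynomial ℝ := (C : ℝ →+* Polynomial ℝ)
  have key : charmatrix ((U : Matrix (Fin n) (Fin n) ℝ) * D * star (U : Matrix (Fin n) (Fin n) ℝ))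
      = (C'.mapMatrix (U : Matrix (Fin n) (Fin n) ℝ)) * charmatrix D *
        (C'.mapMatrix (star (U : Matrix (Fin n) (Fin n) ℝ))) := by
    rw [charmatrix, charmatrix]
    rw [mul_sub, sub_mul]
    congr 1
    · rw [← Matrix.scalar_commute (X : Polynomial ℝ) (fun r => Commute.all _ _) _, mul_assoc,
        ← _root_.map_mul C'.mapMatrix, hUV, _root_.map_one, mul_one]
    · rw [← _root_.map_mul C'.mapMatrix, ← _root_.map_mul C'.mapMatrix]
  have hdet : (C'.mapMatrix (star (U : Matrix (Fin n) (Fin n) ℝ))).det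
      * (C'.mapMatrix (U : Matrix (Fin n) (Fin n) ℝ)).det = 1 := by
    rw [← Matrix.det_mul, ← _root_.map_mul C'.mapMatrix, hVU, _root_.map_one, Matrix.det_one]
  rw [Matrix.charpoly, key, Matrix.det_mul, Matrix.det_mul, Matrix.charpoly]
  rw [mul_comm, ← mul_assoc, hdet, one_mul]

lemma charpoly_hermitian (n : ℕ) (A : Matrix (Fin n) (Fin n) ℝ) (hA : A.IsHermitian) :
    A.charpoly = ∏ i, (X - C (hA.eigenvalues i)) := by
  have hs := hA.spectral_theorem
  have : Matrix.diagonal ((RCLike.ofReal : ℝ → ℝ) ∘ hA.eigenvalues)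
      = Matrix.diagonal hA.eigenvalues := by
    congr 1
  rw [this] at hs
  conv_lhs => rw [hs]
  rw [Unitary.conjStarAlgAut_apply, charpoly_conj, charpoly_diag]

lemma SmatR_n (n : ℕ) (A : Matrix (Fin n) (Fin n) ℝ) (μ : Fin n → ℝ)
    (h : A.charpoly = ∏ i, (X - C (μ i))) :
    SmatR n (n : ℤ) A = ∏ i, μ i := by
  rw [SmatR, if_pos ⟨Int.natCast_nonneg n, le_refl _⟩]
  rw [Int.toNat_natCast, Nat.sub_self, h, coeff0_prod]
  have : ∏ i : Fin n, (-μ i) = (-1 : ℝ) ^ n * ∏ i, μ i := by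
    rw [Finset.prod_congr rfl fun (i : Fin n) _ => (neg_one_mul (μ i)).symm,
      Finset.prod_mul_distrib]
    simp
  rw [this, ← mul_assoc, ← mul_pow]
  norm_num

lemma SmatR_nm1 (n : ℕ) (hn : 0 < n) (A : Matrix (Fin n) (Fin n) ℝ) (μ : Fin n → ℝ)
    (h : A.charpoly = ∏ i, (X - C (μ i))) :
    SmatR n ((n : ℤ) - 1) A = ∑ i : Fin n, ∏ j ∈ Finset.univ.erase i, μ j := by
  have h0 : (0 : ℤ) ≤ (n : ℤ) - 1 := by omega
  have h1 : ((n : ℤ) - 1).toNat = n - 1 := by omega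
  rw [SmatR, if_pos ⟨h0, by omega⟩, h1]
  have h2 : n - (n - 1) = 1 := by omega
  rw [h2, h, coeff1_prod]
  rw [Finset.mul_sum]
  apply Finset.sum_congr rfl
  intro i _
  have hcard : (Finset.univ.erase i).card = n - 1 := by
    rw [Finset.card_erase_of_mem (Finset.mem_univ i), Finset.card_univ, Fintype.card_fin]
  have : ∏ j ∈ Finset.univ.erase i, (-μ j)
      = (-1 : ℝ) ^ (n - 1) * ∏ j ∈ Finset.univ.erase i, μ j := by
    rw [Finset.prod_congr rfl fun (j : Fin n) _ => (neg_one_mul (μ j)).symm,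
      Finset.prod_mul_distrib, Finset.prod_const, hcard]
  rw [this, ← mul_assoc, ← mul_pow]
  norm_num

lemma SmatR_0 (n : ℕ) (hn : 0 < n) (A : Matrix (Fin n) (Fin n) ℝ) : SmatR n 0 A = 1 := by
  rw [SmatR, if_pos ⟨le_refl _, Int.natCast_nonneg n⟩]
  simp only [Int.toNat_zero, Nat.sub_zero, pow_zero, one_mul]
  have : A.charpoly.natDegree = n := by
    haveI : Nonempty (Fin n) := ⟨⟨0, hn⟩⟩
    simpa using A.charpoly_natDegree_eq_dim
  have h2 := A.charpoly_monic.coeff_natDegree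
  rw [this] at h2
  exact h2

lemma S1inv_eq (n : ℕ) (hn : 0 < n) (A : Matrix (Fin n) (Fin n) ℝ) (μ : Fin n → ℝ)
    (h : A.charpoly = ∏ i, (X - C (μ i))) (hμ : ∀ i, μ i ≠ 0) :
    S1inv n A = ∑ i, (μ i)⁻¹ := by
  rw [S1inv, SmatR_n n A μ h, SmatR_nm1 n hn A μ h, Finset.sum_div]
  apply Finset.sum_congr rfl
  intro i _
  rw [eq_comm, inv_eq_iff_eq_inv, inv_div, ← Finset.mul_prod_erase _ _ (Finset.mem_univ i),
    mul_div_assoc, div_self (Finset.prod_ne_zero_iff.mpr fun j _ => hμ j), mul_one]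

lemma Sninv_eq (n : ℕ) (hn : 0 < n) (A : Matrix (Fin n) (Fin n) ℝ) (μ : Fin n → ℝ)
    (h : A.charpoly = ∏ i, (X - C (μ i))) :
    Sninv n A = (∏ i, μ i)⁻¹ := by
  rw [Sninv, SmatR_n n A μ h, SmatR_0 n hn A, one_div]

lemma Fe_eq (n : ℕ) (hn : 0 < n) (ε : ℝ) (A : Matrix (Fin n) (Fin n) ℝ) (μ : Fin n → ℝ)
    (h : A.charpoly = ∏ i, (X - C (μ i))) (hμ : ∀ i, μ i ≠ 0) :
    Fe n ε A = (∑ i, (μ i)⁻¹) - ε * (∏ i, μ i)⁻¹ := by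
  rw [Fe, S1inv_eq n hn A μ h hμ, Sninv_eq n hn A μ h]

lemma path_diag (n : ℕ) (lam : Fin n → ℝ) (i : Fin n) (t : ℝ) :
    Matrix.diagonal lam + t • Matrix.single i i 1
      = Matrix.diagonal (fun k => lam k + if k = i then t else 0) := by
  ext a b
  by_cases hab : a = b
  · subst hab
    by_cases hai : a = i
    · subst hai; simp [Matrix.single_apply_same]
    · simp [Matrix.single, hai, Ne.symm hai]
  · simp only [Matrix.add_apply, Matrix.smul_apply, Matrix.diagonal_apply_ne _ hab,
      Matrix.single, smul_eq_mul, Matrix.of_apply]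
    rw [if_neg (by rintro ⟨rfl, rfl⟩; exact hab rfl)]
    simp

lemma pd_eq (n : ℕ) (hn : 0 < n) (ε : ℝ) (lam : Fin n → ℝ) (hlam : ∀ k, 0 < lam k) (i : Fin n) :
    pd n (Fe n ε) i i (Matrix.diagonal lam)
      = (ε * (∏ j ∈ Finset.univ.erase i, lam j)⁻¹ - 1) / (lam i) ^ 2 := by
  have hP : (0:ℝ) < ∏ j ∈ Finset.univ.erase i, lam j :=
    Finset.prod_pos (fun j _ => hlam j)
  set P := ∏ j ∈ Finset.univ.erase i, lam j with hPdef
  set Cst := ∑ k ∈ Finset.univ.erase i, (lam k)⁻¹ with hCdef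
  have hev : (fun t : ℝ => Fe n ε (Matrix.diagonal lam + t • Matrix.single i i 1))
      =ᶠ[nhds (0:ℝ)] fun t => Cst + (lam i + t)⁻¹ - (lam i + t)⁻¹ * (ε * P⁻¹) := by
    have hmem : Set.Ioi (-(lam i)) ∈ nhds (0:ℝ) := Ioi_mem_nhds (by linarith [hlam i])
    filter_upwards [hmem] with t ht
    have hti : 0 < lam i + t := by have := neg_lt_iff_pos_add.mp (Set.mem_Ioi.mp ht); linarith
    set μt : Fin n → ℝ := fun k => lam k + if k = i then t else 0 with hμt
    have hpos : ∀ k, 0 < μt k := by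
      intro k
      by_cases hk : k = i
      · subst hk; simpa [hμt] using hti
      · simpa [hμt, hk] using hlam k
    have hne : ∀ k, μt k ≠ 0 := fun k => ne_of_gt (hpos k)
    rw [path_diag, Fe_eq n hn ε _ μt (charpoly_diag n μt) hne]
    have hsum : ∑ k, (μt k)⁻¹ = (lam i + t)⁻¹ + Cst := by
      rw [← Finset.add_sum_erase Finset.univ (fun k => (μt k)⁻¹) (Finset.mem_univ i)]
      congr 1
      · simp [hμt]
      · rw [hCdef]
        apply Finset.sum_congr rfl
        intro k hk
        have : k ≠ i := (Finset.mem_erase.mp hk).1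
        simp [hμt, this]
    have hprod : ∏ k, μt k = (lam i + t) * P := by
      rw [← Finset.mul_prod_erase Finset.univ μt (Finset.mem_univ i)]
      congr 1
      · simp [hμt]
      · rw [hPdef]
        apply Finset.prod_congr rfl
        intro k hk
        have : k ≠ i := (Finset.mem_erase.mp hk).1
        simp [hμt, this]
    rw [hsum, hprod, mul_inv]
    ring
  rw [pd, hev.deriv_eq]
  have h1 : HasDerivAt (fun t : ℝ => lam i + t) 1 0 := by
    simpa using (hasDerivAt_id (0:ℝ)).const_add (lam i)
  have h2 : HasDerivAt (fun t : ℝ => (lam i + t)⁻¹) (-1 / (lam i + 0) ^ 2) 0 :=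
    h1.inv (by simpa using ne_of_gt (hlam i))
  have h3 : HasDerivAt (fun t : ℝ => Cst + (lam i + t)⁻¹ - (lam i + t)⁻¹ * (ε * P⁻¹))
      (0 + -1 / (lam i + 0) ^ 2 - (-1 / (lam i + 0) ^ 2) * (ε * P⁻¹)) 0 :=
    ((hasDerivAt_const (0:ℝ) Cst).add h2).sub (h2.mul_const _)
  rw [h3.deriv]
  have hli : lam i ≠ 0 := ne_of_gt (hlam i)
  simp only [add_zero]
  field_simp
  ring

lemma core_est (n : ℕ) (hn : 0 < n) (Q ε : ℝ) (hQ : 0 < Q) (hε : 0 < ε)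
    (hε' : ε < (2 * n * Q ^ (n - 1))⁻¹) (μ : Fin n → ℝ) (hpos : ∀ k, 0 < μ k)
    (hS : (∑ k, (μ k)⁻¹) < Q) :
    0 < (∑ k, (μ k)⁻¹) - ε * (∏ k, μ k)⁻¹ ∧
    (∀ i, ε < ∏ j ∈ Finset.univ.erase i, μ j) ∧
    (2 * (n : ℝ) - 1) * (ε * (∏ k, μ k)⁻¹) < ∑ k, (μ k)⁻¹ := by
  have hn1 : (1 : ℝ) ≤ n := by exact_mod_cast hn
  have hQpow : (0 : ℝ) < Q ^ (n - 1) := by positivity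
  have hS0 : ∀ k, (μ k)⁻¹ ≤ ∑ j, (μ j)⁻¹ := fun k =>
    Finset.single_le_sum (fun j _ => inv_nonneg.mpr (hpos j).le) (Finset.mem_univ k)
  have hiQ : ∀ k, Q⁻¹ < μ k := fun k =>
    inv_lt_of_inv_lt₀ (hpos k) (lt_of_le_of_lt (hS0 k) hS)
  have hPQ : ∀ i, (Q ^ (n - 1))⁻¹ ≤ ∏ j ∈ Finset.univ.erase i, μ j := by
    intro i
    have hcard : (Finset.univ.erase i).card = n - 1 := by
      rw [Finset.card_erase_of_mem (Finset.mem_univ i), Finset.card_univ, Fintype.card_fin]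
    have h1 : ∏ j ∈ Finset.univ.erase i, Q⁻¹ ≤ ∏ j ∈ Finset.univ.erase i, μ j :=
      Finset.prod_le_prod (fun j _ => inv_nonneg.mpr hQ.le) (fun j _ => (hiQ j).le)
    rw [Finset.prod_const, hcard] at h1
    rwa [← inv_pow]
  have hεP : ∀ i, ε < ∏ j ∈ Finset.univ.erase i, μ j := by
    intro i
    refine lt_of_lt_of_le (lt_of_lt_of_le hε' ?_) (hPQ i)
    apply inv_anti₀ hQpow
    nlinarith
  set i0 : Fin n := ⟨0, hn⟩
  have hP0 : (0:ℝ) < ∏ j ∈ Finset.univ.erase i0, μ j :=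
    Finset.prod_pos (fun j _ => hpos j)
  have hP0inv : (∏ j ∈ Finset.univ.erase i0, μ j)⁻¹ ≤ Q ^ (n - 1) := by
    have := inv_anti₀ (by positivity) (hPQ i0)
    rwa [inv_inv] at this
  have hprod : ∏ k, μ k = μ i0 * ∏ j ∈ Finset.univ.erase i0, μ j :=
    (Finset.mul_prod_erase Finset.univ μ (Finset.mem_univ i0)).symm
  set b := (μ i0)⁻¹ with hbdef
  have hb : 0 < b := inv_pos.mpr (hpos i0)
  have hbS : b ≤ ∑ j, (μ j)⁻¹ := hS0 i0
  set a := ε * (∏ k, μ k)⁻¹ with hadef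
  have ha : 0 < a := by
    apply mul_pos hε
    exact inv_pos.mpr (Finset.prod_pos (fun j _ => hpos j))
  have haQ : a ≤ ε * Q ^ (n - 1) * b := by
    rw [hadef, hprod, mul_inv]
    calc ε * ((μ i0)⁻¹ * (∏ j ∈ Finset.univ.erase i0, μ j)⁻¹)
        ≤ ε * ((μ i0)⁻¹ * Q ^ (n - 1)) := by
          apply mul_le_mul_of_nonneg_left _ hε.le
          exact mul_le_mul_of_nonneg_left hP0inv (inv_nonneg.mpr (hpos i0).le)
      _ = ε * Q ^ (n - 1) * b := by rw [hbdef]; ring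
  have hεQ : ε * Q ^ (n - 1) < (2 * (n:ℝ))⁻¹ := by
    have hn0 : (2 * (n:ℝ)) ≠ 0 := by positivity
    have h2 : (2 * (n:ℝ) * Q ^ (n - 1))⁻¹ * Q ^ (n - 1) = (2 * (n:ℝ))⁻¹ := by
      field_simp
    calc ε * Q ^ (n - 1) < (2 * (n:ℝ) * Q ^ (n - 1))⁻¹ * Q ^ (n - 1) :=
          mul_lt_mul_of_pos_right hε' hQpow
      _ = (2 * (n:ℝ))⁻¹ := h2
  have h2na : 2 * (n:ℝ) * a < b := by
    have h1 : a < (2 * (n:ℝ))⁻¹ * b :=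
      haQ.trans_lt (mul_lt_mul_of_pos_right hεQ hb)
    have h2n : (0:ℝ) < 2 * n := by linarith
    calc 2 * (n:ℝ) * a < 2 * n * ((2 * (n:ℝ))⁻¹ * b) :=
          mul_lt_mul_of_pos_left h1 h2n
      _ = b := by field_simp
  refine ⟨?_, hεP, ?_⟩
  · nlinarith
  · nlinarith

/-- Lemma 4.1 (1): for every `Q > 0` there is `ε₀ > 0` such that for all `0 < ε < ε₀`,
`F_ε(A) = S_1(A⁻¹) - ε S_n(A⁻¹)` satisfies, for every positive definite Hermitian `A` with
`S_1(A⁻¹) < Q`: `F_ε(A) > 0`; and at diagonal such `A` with eigenvalues `λ_1, …, λ_n`: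
`∂_{ii}F_ε(A) < 0` for all `i`,
`Σ_k (-λ_k ∂_{kk}F_ε(A)) = S_1(A⁻¹) - n ε S_n(A⁻¹)`, and
`(1/2) F_ε(A) < Σ_k (-λ_k ∂_{kk}F_ε(A)) ≤ S_1(A⁻¹)`. -/
theorem statement9 (n : ℕ) (hn : 0 < n) (Q : ℝ) (hQ : 0 < Q) :
    ∃ ε₀ > 0, ∀ ε : ℝ, 0 < ε → ε < ε₀ →
      (∀ A : Matrix (Fin n) (Fin n) ℝ, A.PosDef → S1inv n A < Q → 0 < Fe n ε A) ∧
      (∀ lam : Fin n → ℝ, (Matrix.diagonal lam).PosDef →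
          S1inv n (Matrix.diagonal lam) < Q →
        (∀ i : Fin n, pd n (Fe n ε) i i (Matrix.diagonal lam) < 0) ∧
        (∑ k : Fin n, -(lam k) * pd n (Fe n ε) k k (Matrix.diagonal lam)) =
          S1inv n (Matrix.diagonal lam) - (n : ℝ) * ε * Sninv n (Matrix.diagonal lam) ∧
        (1 / 2) * Fe n ε (Matrix.diagonal lam) <
          (∑ k : Fin n, -(lam k) * pd n (Fe n ε) k k (Matrix.diagonal lam)) ∧
        (∑ k : Fin n, -(lam k) * pd n (Fe n ε) k k (Matrix.diagonal lam)) ≤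
          S1inv n (Matrix.diagonal lam)) := by
  refine ⟨(2 * n * Q ^ (n - 1))⁻¹, by positivity, ?_⟩
  intro ε hε hε'
  have hn1 : (1 : ℝ) ≤ n := by exact_mod_cast hn
  constructor
  · -- general positive definite A
    intro A hA hS1
    set μ := hA.1.eigenvalues with hμdef
    have hpos : ∀ k, 0 < μ k := fun k => hA.eigenvalues_pos k
    have hne : ∀ k, μ k ≠ 0 := fun k => ne_of_gt (hpos k)
    have hch := charpoly_hermitian n A hA.1
    have hSeq := S1inv_eq n hn A μ hch hne
    rw [hSeq] at hS1
    have hcore := core_est n hn Q ε hQ hε hε' μ hpos hS1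
    rw [Fe_eq n hn ε A μ hch hne]
    exact hcore.1
  · -- diagonal case
    intro lam hlam hS1
    have hpos : ∀ k, 0 < lam k := Matrix.posDef_diagonal_iff.mp hlam
    have hne : ∀ k, lam k ≠ 0 := fun k => ne_of_gt (hpos k)
    have hch := charpoly_diag n lam
    have hSeq := S1inv_eq n hn (Matrix.diagonal lam) lam hch hne
    have hSneq := Sninv_eq n hn (Matrix.diagonal lam) lam hch
    rw [hSeq] at hS1
    have hcore := core_est n hn Q ε hQ hε hε' lam hpos hS1
    have hprodpos : (0:ℝ) < ∏ k, lam k := Finset.prod_pos (fun k _ => hpos k)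
    have hterm : ∀ k : Fin n, -(lam k) * pd n (Fe n ε) k k (Matrix.diagonal lam)
        = (lam k)⁻¹ - ε * (∏ j, lam j)⁻¹ := by
      intro k
      rw [pd_eq n hn ε lam hpos k]
      have hPk : (0:ℝ) < ∏ j ∈ Finset.univ.erase k, lam j :=
        Finset.prod_pos (fun j _ => hpos j)
      have hprod : ∏ j, lam j = lam k * ∏ j ∈ Finset.univ.erase k, lam j :=
        (Finset.mul_prod_erase Finset.univ lam (Finset.mem_univ k)).symm
      have h1 : lam k ≠ 0 := hne k
      have h2 : (∏ j ∈ Finset.univ.erase k, lam j) ≠ 0 := ne_of_gt hPk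
      rw [hprod]
      field_simp
      ring
    have hsum : (∑ k : Fin n, -(lam k) * pd n (Fe n ε) k k (Matrix.diagonal lam))
        = (∑ k, (lam k)⁻¹) - (n : ℝ) * (ε * (∏ j, lam j)⁻¹) := by
      rw [Finset.sum_congr rfl (fun k _ => hterm k), Finset.sum_sub_distrib,
        Finset.sum_const, Finset.card_univ, Fintype.card_fin, nsmul_eq_mul]
    refine ⟨?_, ?_, ?_, ?_⟩
    · -- pd negative
      intro i
      rw [pd_eq n hn ε lam hpos i]
      have hPi : (0:ℝ) < ∏ j ∈ Finset.univ.erase i, lam j :=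
        Finset.prod_pos (fun j _ => hpos j)
      apply div_neg_of_neg_of_pos _ (pow_pos (hpos i) 2)
      have : ε * (∏ j ∈ Finset.univ.erase i, lam j)⁻¹ < 1 := by
        rw [← div_eq_mul_inv]
        exact (div_lt_one hPi).mpr (hcore.2.1 i)
      linarith
    · -- sum identity
      rw [hsum, hSeq, hSneq]
      ring
    · -- half inequality
      rw [hsum, Fe_eq n hn ε (Matrix.diagonal lam) lam hch hne]
      have h := hcore.2.2
      have ha : 0 < ε * (∏ k, lam k)⁻¹ := by positivity
      nlinarith
    · -- upper bound
      rw [hsum, hSeq]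
      have ha : 0 ≤ (n:ℝ) * (ε * (∏ j, lam j)⁻¹) := by positivity
      linarith
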